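/- arXiv:2503.08139 — 3 statements merged into one kernel-verified Lean document; each statement's English description precedes it below -/
import Mathlib

section
/- Let v ∈ S^{n-1} be an incompressible vector in Incomp(δ,ρ). Then there are at least ρ²δn/2 indices i ∈ [n] for which (ρ/2)·n^{-1/2} ≤ |v_i| ≤ δ^{-1/2}·n^{-1/2}. -/
/-- Euclidean norm of a vector. -/
noncomputable def enorm2 {ι : Type*} [Fintype ι] (v : ι → ℝ) : ℝ := Real.sqrt (∑ i, v i ^ 2)

/-- Vectors with at most `δn` nonzero coordinates. -/
noncomputable def SparseVec (n : ℕ) (δ : ℝ) : Set (Fin n → ℝ) :=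
  {x | ((Set.toFinite {i | x i ≠ 0}).toFinset.card : ℝ) ≤ δ * n}

/-- Compressible unit vectors: within distance `ρ` of `Sparse(δ)`. -/
noncomputable def CompVec (n : ℕ) (δ ρ : ℝ) : Set (Fin n → ℝ) :=
  {x | enorm2 x = 1 ∧ ∃ s ∈ SparseVec n δ, enorm2 (x - s) ≤ ρ}

/-- Incompressible unit vectors. -/
noncomputable def IncompVec (n : ℕ) (δ ρ : ℝ) : Set (Fin n → ℝ) :=
  {x | enorm2 x = 1 ∧ x ∉ CompVec n δ ρ}

/-- spread property of incompressible vectors: if `v ∈ Incomp(δ,ρ)` then at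
least `ρ²δn/2` coordinates satisfy `ρ/(2√n) ≤ |v_i| ≤ 1/(√δ √n)`. -/
theorem stmt4
    (n : ℕ) (δ ρ : ℝ) (hδ : δ ∈ Set.Ioo (0:ℝ) 1) (hρ : ρ ∈ Set.Ioo (0:ℝ) 1)
    (v : Fin n → ℝ) (hv : v ∈ IncompVec n δ ρ) :
    ρ ^ 2 * δ * n / 2 ≤
      ((Set.toFinite {i : Fin n |
        (ρ / 2) / Real.sqrt n ≤ |v i| ∧ |v i| ≤ (Real.sqrt δ)⁻¹ / Real.sqrt n}).toFinset.card : ℝ) := by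
  classical
  obtain ⟨hδ0, hδ1⟩ := hδ
  obtain ⟨hρ0, hρ1⟩ := hρ
  obtain ⟨hv1, hv2⟩ := hv
  have hsum : ∑ i, v i ^ 2 = 1 := by
    have h := hv1
    unfold enorm2 at h
    rwa [Real.sqrt_eq_one] at h
  have hn : 0 < n := by
    by_contra h
    push_neg at h
    interval_cases n
    simp at hsum
  have hnR : (0:ℝ) < n := by exact_mod_cast hn
  have hsn : (0:ℝ) < Real.sqrt n := Real.sqrt_pos.mpr hnR
  have hsδ : (0:ℝ) < Real.sqrt δ := Real.sqrt_pos.mpr hδ0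
  set U : ℝ := (Real.sqrt δ)⁻¹ / Real.sqrt n with hU
  set L : ℝ := (ρ / 2) / Real.sqrt n with hL
  have hU0 : 0 < U := div_pos (inv_pos.mpr hsδ) hsn
  have hL0 : 0 < L := div_pos (by linarith) hsn
  have hUsq : U ^ 2 = δ⁻¹ / n := by
    rw [hU, div_pow, inv_pow, Real.sq_sqrt hδ0.le, Real.sq_sqrt hnR.le]
  have hLsq : L ^ 2 = ρ ^ 2 / 4 / n := by
    rw [hL, div_pow, Real.sq_sqrt hnR.le]
    ring
  have hLU : L ≤ U := by
    have h2 : Real.sqrt δ ≤ 1 := Real.sqrt_le_one.mpr hδ1.le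
    have h1 : (1:ℝ) ≤ (Real.sqrt δ)⁻¹ := (one_le_inv₀ hsδ).mpr h2
    rw [hL, hU]
    gcongr
    linarith
  set B : Finset (Fin n) := Finset.univ.filter (fun i => U < |v i|) with hB
  set M : Finset (Fin n) := Finset.univ.filter (fun i => L ≤ |v i| ∧ |v i| ≤ U) with hM
  set Sm : Finset (Fin n) := Finset.univ.filter (fun i => |v i| < L) with hSm
  -- card bound on B
  have hBsum : (B.card : ℝ) * (δ⁻¹ / n) ≤ 1 := by
    have h1 : ∀ i ∈ B, δ⁻¹ / n ≤ v i ^ 2 := by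
      intro i hi
      have hi' := (Finset.mem_filter.mp hi).2
      calc δ⁻¹ / n = U ^ 2 := hUsq.symm
        _ ≤ |v i| ^ 2 := pow_le_pow_left₀ hU0.le hi'.le 2
        _ = v i ^ 2 := sq_abs _
    calc (B.card : ℝ) * (δ⁻¹ / n) = ∑ _i ∈ B, (δ⁻¹ / n) := by
          rw [Finset.sum_const, nsmul_eq_mul]
      _ ≤ ∑ i ∈ B, v i ^ 2 := Finset.sum_le_sum h1
      _ ≤ ∑ i, v i ^ 2 := Finset.sum_le_sum_of_subset_of_nonneg (Finset.subset_univ _)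
          (fun i _ _ => sq_nonneg _)
      _ = 1 := hsum
  have hBcard : (B.card : ℝ) ≤ δ * n := by
    have h2 := mul_le_mul_of_nonneg_right hBsum (le_of_lt (mul_pos hδ0 hnR))
    have h3 : (B.card : ℝ) * (δ⁻¹ / n) * (δ * n) = B.card := by
      field_simp
    rw [h3, one_mul] at h2
    exact h2
  -- the sparse approximation
  set s : Fin n → ℝ := fun i => if U < |v i| then v i else 0 with hs
  have hsSparse : s ∈ SparseVec n δ := by
    unfold SparseVec
    have hsub : (Set.toFinite {i | s i ≠ 0}).toFinset ⊆ B := by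
      intro i hi
      simp only [Set.Finite.mem_toFinset, Set.mem_setOf_eq] at hi
      rw [hB, Finset.mem_filter]
      refine ⟨Finset.mem_univ _, ?_⟩
      by_contra h
      exact hi (by simp [hs, h])
    calc ((Set.toFinite {i | s i ≠ 0}).toFinset.card : ℝ) ≤ (B.card : ℝ) := by
          exact_mod_cast Finset.card_le_card hsub
      _ ≤ δ * n := hBcard
  have hfar : ρ < enorm2 (v - s) := by
    by_contra h
    push_neg at h
    exact hv2 ⟨hv1, s, hsSparse, h⟩
  have hfar2 : ρ ^ 2 < ∑ i, (v i - s i) ^ 2 := by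
    have h := hfar
    unfold enorm2 at h
    have h2 := (Real.lt_sqrt (le_of_lt hρ0)).mp h
    simpa [Pi.sub_apply] using h2
  -- split the sum
  have hcompl : ∀ i, (¬ U < |v i|) ↔ ((L ≤ |v i| ∧ |v i| ≤ U) ∨ |v i| < L) := by
    intro i
    constructor
    · intro h
      push_neg at h
      rcases le_or_gt L |v i| with h2 | h2
      · exact Or.inl ⟨h2, h⟩
      · exact Or.inr h2
    · rintro (⟨_, h⟩ | h)
      · exact not_lt.mpr h
      · exact not_lt.mpr (le_trans h.le hLU)
  have hdisj : Disjoint M Sm := by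
    rw [hM, hSm, Finset.disjoint_filter]
    intro i _ hi
    exact not_lt.mpr hi.1
  have hsplit : ∑ i, (v i - s i) ^ 2 = ∑ i ∈ M, v i ^ 2 + ∑ i ∈ Sm, v i ^ 2 := by
    have e2 : Finset.univ.filter (fun i => ¬ U < |v i|) = M ∪ Sm := by
      ext i
      simp only [Finset.mem_filter, Finset.mem_univ, true_and, Finset.mem_union,
        hM, hSm]
      rw [hcompl i]
    calc ∑ i, (v i - s i) ^ 2
        = ∑ i, (if ¬ U < |v i| then v i ^ 2 else 0) := by
          apply Finset.sum_congr rfl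
          intro i _
          by_cases h : U < |v i| <;> simp [hs, h]
      _ = ∑ i ∈ Finset.univ.filter (fun i => ¬ U < |v i|), v i ^ 2 :=
          (Finset.sum_filter _ _).symm
      _ = ∑ i ∈ M ∪ Sm, v i ^ 2 := by rw [e2]
      _ = ∑ i ∈ M, v i ^ 2 + ∑ i ∈ Sm, v i ^ 2 := Finset.sum_union hdisj
  have hMsum : ∑ i ∈ M, v i ^ 2 ≤ (M.card : ℝ) * (δ⁻¹ / n) := by
    calc ∑ i ∈ M, v i ^ 2 ≤ ∑ _i ∈ M, (δ⁻¹ / n) := by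
          apply Finset.sum_le_sum
          intro i hi
          have hi' := (Finset.mem_filter.mp hi).2
          rw [← hUsq, ← sq_abs]
          exact pow_le_pow_left₀ (abs_nonneg _) hi'.2 2
      _ = (M.card : ℝ) * (δ⁻¹ / n) := by rw [Finset.sum_const, nsmul_eq_mul]
  have hSmsum : ∑ i ∈ Sm, v i ^ 2 ≤ ρ ^ 2 / 4 := by
    calc ∑ i ∈ Sm, v i ^ 2 ≤ ∑ _i ∈ Sm, (ρ ^ 2 / 4 / n) := by
          apply Finset.sum_le_sum
          intro i hi
          have hi' := (Finset.mem_filter.mp hi).2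
          rw [← hLsq, ← sq_abs]
          exact pow_le_pow_left₀ (abs_nonneg _) hi'.le 2
      _ = (Sm.card : ℝ) * (ρ ^ 2 / 4 / n) := by rw [Finset.sum_const, nsmul_eq_mul]
      _ ≤ (n : ℝ) * (ρ ^ 2 / 4 / n) := by
          apply mul_le_mul_of_nonneg_right _ (by positivity)
          have : Sm.card ≤ n := by
            simpa using Finset.card_le_card (Finset.subset_univ Sm)
          exact_mod_cast this
      _ = ρ ^ 2 / 4 := by field_simp
  -- conclude
  have hkey : ρ ^ 2 * δ * n / 2 ≤ (M.card : ℝ) := by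
    have h1 : ρ ^ 2 < (M.card : ℝ) * (δ⁻¹ / n) + ρ ^ 2 / 4 := by
      calc ρ ^ 2 < ∑ i, (v i - s i) ^ 2 := hfar2
        _ = ∑ i ∈ M, v i ^ 2 + ∑ i ∈ Sm, v i ^ 2 := hsplit
        _ ≤ (M.card : ℝ) * (δ⁻¹ / n) + ρ ^ 2 / 4 := add_le_add hMsum hSmsum
    have h2 : (3/4 : ℝ) * ρ ^ 2 * (δ * n) < (M.card : ℝ) * (δ⁻¹ / n) * (δ * n) :=
      mul_lt_mul_of_pos_right (by linarith) (by positivity)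
    have h3 : (M.card : ℝ) * (δ⁻¹ / n) * (δ * n) = (M.card : ℝ) := by
      field_simp
    rw [h3] at h2
    nlinarith [sq_nonneg ρ, mul_pos hδ0 hnR, sq_nonneg ρ]
  have hfin : (Set.toFinite {i : Fin n | L ≤ |v i| ∧ |v i| ≤ U}).toFinset = M := by
    ext i
    simp [hM]
  calc ρ ^ 2 * δ * n / 2 ≤ (M.card : ℝ) := hkey
    _ = _ := by rw [hfin]
end

section
/- Let A be an n × n real symmetric matrix. Suppose λ_{i+k}(A) − λ_i(A) ≤ ε (eigenvalues in increasing order), where i + k ≤ n. Let v₁,…,v_k be orthonormal eigenvectors of the top-left (n−1) × (n−1) principal submatrix A_{n−1} corresponding to λ_i(A_{n−1}),…,λ_{i+k−1}(A_{n−1}). Write the last column of A as (Xᵀ, a_{nn}) and let u = (wᵀ, b)ᵀ be a unit eigenvector of A with eigenvalue λ_i(A). Then for every j ∈ [k]: |b|·|v_jᵀX| ≤ |λ_{i+j−1}(A_{n−1}) − λ_i(A)| ≤ ε, where the last inequality uses Cauchy interlacing (λ_i(A) ≤ λ_i(A_{n−1}) ≤ … ≤ λ_{i+k−1}(A_{n−1})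 ≤ λ_{i+k}(A)). -/
open Matrix

/-- Eigenvalues of a real symmetric matrix, sorted in increasing order
(`eigAsc hA j` = `λ_{j+1}` in the paper's 1-indexed notation). -/
noncomputable def eigAsc {n : ℕ} {A : Matrix (Fin n) (Fin n) ℝ} (hA : A.IsHermitian) :
    Fin n → ℝ :=
  hA.eigenvalues ∘ Tuple.sort hA.eigenvalues

section aux11
variable {N : ℕ} {M : Matrix (Fin N) (Fin N) ℝ} (hM : M.IsHermitian)

lemma dotProduct_sum' {P : ℕ} {ι : Type*} [Fintype ι] (v : Fin P → ℝ) (f : ι → Fin P → ℝ) :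
    v ⬝ᵥ (∑ s, f s) = ∑ s, v ⬝ᵥ f s := by
  simp only [dotProduct, Finset.sum_apply, Finset.mul_sum]
  exact Finset.sum_comm

lemma sum_dotProduct' {P : ℕ} {ι : Type*} [Fintype ι] (v : Fin P → ℝ) (f : ι → Fin P → ℝ) :
    (∑ s, f s) ⬝ᵥ v = ∑ s, f s ⬝ᵥ v := by
  simp only [dotProduct, Finset.sum_apply, Finset.sum_mul]
  exact Finset.sum_comm



noncomputable def sw : Fin N → Fin N → ℝ :=
  fun j => ⇑(hM.eigenvectorBasis (Tuple.sort hM.eigenvalues j))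

lemma sw_dot (j j' : Fin N) : sw hM j ⬝ᵥ sw hM j' = if j = j' then 1 else 0 := by
  have h := hM.eigenvectorBasis.orthonormal
  rw [orthonormal_iff_ite] at h
  have h2 := h (Tuple.sort hM.eigenvalues j) (Tuple.sort hM.eigenvalues j')
  simp only [EmbeddingLike.apply_eq_iff_eq] at h2
  rw [← h2]
  simp [PiLp.inner_apply, RCLike.inner_apply, dotProduct, sw]
  exact Finset.sum_congr rfl fun _ _ => mul_comm _ _

lemma sw_eig (j : Fin N) : M *ᵥ sw hM j = eigAsc hM j • sw hM j :=
  hM.mulVec_eigenvectorBasis _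

lemma eigAsc_mono' : Monotone (eigAsc hM) := Tuple.monotone_sort _

lemma sw_repr (x : Fin N → ℝ) : x = ∑ j, (sw hM j ⬝ᵥ x) • sw hM j := by
  have hU := (Matrix.mem_unitaryGroup_iff).mp (hM.eigenvectorUnitary).2
  have h1 : (hM.eigenvectorUnitary : Matrix (Fin N) (Fin N) ℝ) *ᵥ
      ((star (hM.eigenvectorUnitary : Matrix (Fin N) (Fin N) ℝ)) *ᵥ x) = x := by
    rw [mulVec_mulVec, hU, one_mulVec]
  have h2 : x = ∑ j, (⇑(hM.eigenvectorBasis j) ⬝ᵥ x) • ⇑(hM.eigenvectorBasis j) := by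
    funext r
    conv_lhs => rw [← h1]
    simp only [mulVec, dotProduct, Matrix.star_apply, star_trivial,
      IsHermitian.eigenvectorUnitary_apply, Finset.sum_apply, Pi.smul_apply, smul_eq_mul]
    exact Finset.sum_congr rfl fun j _ => mul_comm _ _
  exact h2.trans (Equiv.sum_comp (Tuple.sort hM.eigenvalues) _).symm

lemma comb_dot_emb {p : ℕ} (e : Fin p → Fin N) (he : Function.Injective e)
    (c d : Fin p → ℝ) :
    (∑ s, c s • sw hM (e s)) ⬝ᵥ (∑ s, d s • sw hM (e s)) = ∑ s, c s * d s := by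
  rw [dotProduct_sum']
  simp only [dotProduct_smul, sum_dotProduct', smul_dotProduct, sw_dot, smul_eq_mul,
    mul_ite, mul_one, mul_zero, he.eq_iff]
  simp [Finset.sum_ite_eq, mul_comm]

lemma sw_dot_comb {p : ℕ} (e : Fin p → Fin N) (c : Fin p → ℝ) (t : Fin N)
    (ht : ∀ s, e s ≠ t) :
    sw hM t ⬝ᵥ (∑ s, c s • sw hM (e s)) = 0 := by
  rw [dotProduct_sum']
  simp only [dotProduct_smul, sw_dot, smul_eq_mul]
  refine Finset.sum_eq_zero fun s _ => ?_
  rw [if_neg fun h => ht s h.symm, mul_zero]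

lemma quad_comb (c : Fin N → ℝ) :
    (∑ j, c j • sw hM j) ⬝ᵥ (M *ᵥ ∑ j, c j • sw hM j) = ∑ j, eigAsc hM j * c j ^ 2 := by
  have hmv : M *ᵥ ∑ j, c j • sw hM j = ∑ j, (eigAsc hM j * c j) • sw hM j := by
    rw [show M *ᵥ ∑ j, c j • sw hM j = M.mulVecLin (∑ j, c j • sw hM j) from rfl, map_sum]
    refine Finset.sum_congr rfl fun j _ => ?_
    rw [LinearMap.map_smul, mulVecLin_apply, sw_eig, smul_smul, mul_comm]
  rw [hmv, dotProduct_sum']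
  simp only [dotProduct_smul, sum_dotProduct', smul_dotProduct, sw_dot, smul_eq_mul,
    mul_ite, mul_one, mul_zero]
  simp [Finset.sum_ite_eq, Finset.sum_ite_eq', Finset.mul_sum, mul_ite]
  exact Finset.sum_congr rfl fun j _ => by ring

lemma quad_ge (x : Fin N → ℝ) (m : Fin N) (hlow : ∀ t : Fin N, t < m → sw hM t ⬝ᵥ x = 0) :
    eigAsc hM m * (x ⬝ᵥ x) ≤ x ⬝ᵥ (M *ᵥ x) := by
  have hx := sw_repr hM x
  set r : Fin N → ℝ := fun j => sw hM j ⬝ᵥ x with hr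
  have h1 : x ⬝ᵥ (M *ᵥ x) = ∑ j, eigAsc hM j * r j ^ 2 := by
    conv_lhs => rw [hx]
    exact quad_comb hM r
  have h2 : x ⬝ᵥ x = ∑ j, r j * r j := by
    conv_lhs => rw [hx]
    exact comb_dot_emb hM id Function.injective_id r r
  rw [h1, h2, Finset.mul_sum]
  refine Finset.sum_le_sum fun j _ => ?_
  rcases lt_or_ge j m with h | h
  · simp [hr, hlow j h]
  · have := eigAsc_mono' hM h
    nlinarith [sq_nonneg (r j)]

lemma quad_le (x : Fin N → ℝ) (m : Fin N) (hhigh : ∀ t : Fin N, m < t → sw hM t ⬝ᵥ x = 0) :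
    x ⬝ᵥ (M *ᵥ x) ≤ eigAsc hM m * (x ⬝ᵥ x) := by
  have hx := sw_repr hM x
  set r : Fin N → ℝ := fun j => sw hM j ⬝ᵥ x with hr
  have h1 : x ⬝ᵥ (M *ᵥ x) = ∑ j, eigAsc hM j * r j ^ 2 := by
    conv_lhs => rw [hx]
    exact quad_comb hM r
  have h2 : x ⬝ᵥ x = ∑ j, r j * r j := by
    conv_lhs => rw [hx]
    exact comb_dot_emb hM id Function.injective_id r r
  rw [h1, h2, Finset.mul_sum]
  refine Finset.sum_le_sum fun j _ => ?_
  rcases lt_or_ge m j with h | h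
  · simp [hr, hhigh j h]
  · have := eigAsc_mono' hM h
    nlinarith [sq_nonneg (r j)]


end aux11


lemma exists_null {P p q : ℕ} (hqp : q < p) (a : Fin q → Fin P → ℝ)
    (w : Fin p → Fin P → ℝ) :
    ∃ c : Fin p → ℝ, c ≠ 0 ∧ ∀ t, a t ⬝ᵥ (∑ s, c s • w s) = 0 := by
  classical
  set G : Matrix (Fin q) (Fin p) ℝ := Matrix.of fun t s => a t ⬝ᵥ w s with hG
  have hni : ¬ Function.Injective G.mulVecLin := by
    intro h
    have := LinearMap.finrank_le_finrank_of_injective h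
    simp only [Module.finrank_pi, Fintype.card_fin] at this
    omega
  rw [Function.not_injective_iff] at hni
  obtain ⟨c₁, c₂, heq, hne⟩ := hni
  refine ⟨c₁ - c₂, sub_ne_zero.2 hne, fun t => ?_⟩
  have hGc : G *ᵥ (c₁ - c₂) = 0 := by
    have : G.mulVecLin (c₁ - c₂) = 0 := by rw [map_sub, heq, sub_self]
    simpa [mulVecLin_apply] using this
  have ht := congrFun hGc t
  simp only [mulVec, dotProduct, Pi.zero_apply] at ht
  rw [dotProduct_sum']
  simp only [dotProduct_smul, smul_eq_mul]
  rw [← ht]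
  exact Finset.sum_congr rfl fun s _ => by simp [hG, mul_comm]

section snoc
variable {N : ℕ}

lemma snoc_dot (y z : Fin N → ℝ) :
    (Fin.snoc y 0 : Fin (N + 1) → ℝ) ⬝ᵥ (Fin.snoc z 0 : Fin (N + 1) → ℝ) = y ⬝ᵥ z := by
  simp [dotProduct, Fin.sum_univ_castSucc]

lemma snoc_quad {A : Matrix (Fin (N + 1)) (Fin (N + 1)) ℝ} {B : Matrix (Fin N) (Fin N) ℝ}
    (hB : B = A.submatrix Fin.castSucc Fin.castSucc) (y : Fin N → ℝ) :
    (Fin.snoc y 0 : Fin (N + 1) → ℝ) ⬝ᵥ (A *ᵥ (Fin.snoc y 0 : Fin (N + 1) → ℝ))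
      = y ⬝ᵥ (B *ᵥ y) := by
  subst hB
  simp [dotProduct, mulVec, Fin.sum_univ_castSucc]

lemma snoc_sum {p : ℕ} (c : Fin p → ℝ) (w : Fin p → Fin N → ℝ) :
    (Fin.snoc (∑ s, c s • w s) 0 : Fin (N + 1) → ℝ)
      = ∑ s, c s • (Fin.snoc (w s) 0 : Fin (N + 1) → ℝ) := by
  funext r
  refine Fin.lastCases ?_ (fun r => ?_) r <;>
    simp [Finset.sum_apply]

lemma sumsq_pos {p : ℕ} {c : Fin p → ℝ} (hc : c ≠ 0) : 0 < ∑ s, c s * c s := by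
  obtain ⟨s0, hs0⟩ := Function.ne_iff.1 hc
  have hs0' : c s0 ≠ (0:ℝ) := by simpa using hs0
  calc (0:ℝ) < c s0 * c s0 := mul_self_pos.2 hs0'
    _ ≤ ∑ s, c s * c s :=
      Finset.single_le_sum (fun s _ => mul_self_nonneg (c s)) (Finset.mem_univ s0)

end snoc

theorem interlace_lower {N : ℕ} {A : Matrix (Fin (N + 1)) (Fin (N + 1)) ℝ}
    (hA : A.IsHermitian) {B : Matrix (Fin N) (Fin N) ℝ}
    (hB : B = A.submatrix Fin.castSucc Fin.castSucc) (hBH : B.IsHermitian) (m : Fin N) :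
    eigAsc hA (Fin.castSucc m) ≤ eigAsc hBH m := by
  classical
  obtain ⟨c, hc, hcon⟩ := exists_null (P := N + 1) (p := (m : ℕ) + 1) (q := (m : ℕ))
    (Nat.lt_succ_self _)
    (fun t => sw hA ⟨t.1, by omega⟩)
    (fun s => (Fin.snoc (sw hBH ⟨s.1, by omega⟩) 0 : Fin (N + 1) → ℝ))
  set y : Fin N → ℝ := ∑ s : Fin ((m : ℕ) + 1), c s • sw hBH ⟨s.1, by omega⟩ with hy
  have hxy : (∑ s : Fin ((m : ℕ) + 1),
      c s • (Fin.snoc (sw hBH ⟨s.1, by omega⟩) 0 : Fin (N + 1) → ℝ))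
      = (Fin.snoc y 0 : Fin (N + 1) → ℝ) := by
    rw [hy, snoc_sum]
  set x : Fin (N + 1) → ℝ := (Fin.snoc y 0 : Fin (N + 1) → ℝ) with hx
  have hlow : ∀ t : Fin (N + 1), t < Fin.castSucc m → sw hA t ⬝ᵥ x = 0 := by
    intro t ht
    have h := hcon ⟨t.1, by simpa [Fin.lt_def] using ht⟩
    rw [hxy] at h
    simpa using h
  have h1 := quad_ge hA x (Fin.castSucc m) hlow
  have h2 : ∀ t : Fin N, m < t → sw hBH t ⬝ᵥ y = 0 := by
    intro t ht
    refine sw_dot_comb hBH _ c t fun s => ?_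
    intro h
    have : (s : ℕ) = (t : ℕ) := congrArg Fin.val h
    have := s.2
    omega
  have h3 := quad_le hBH y m h2
  have hqx : x ⬝ᵥ (A *ᵥ x) = y ⬝ᵥ (B *ᵥ y) := snoc_quad hB y
  have hnx : x ⬝ᵥ x = y ⬝ᵥ y := snoc_dot y y
  have hyy : y ⬝ᵥ y = ∑ s, c s * c s := by
    rw [hy]
    exact comb_dot_emb hBH _ (fun s s' h => by
      injection h with hv; exact Fin.ext hv) c c
  have hpos : 0 < y ⬝ᵥ y := by rw [hyy]; exact sumsq_pos hc
  have : eigAsc hA (Fin.castSucc m) * (y ⬝ᵥ y) ≤ eigAsc hBH m * (y ⬝ᵥ y) := by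
    calc eigAsc hA (Fin.castSucc m) * (y ⬝ᵥ y)
        = eigAsc hA (Fin.castSucc m) * (x ⬝ᵥ x) := by rw [hnx]
      _ ≤ x ⬝ᵥ (A *ᵥ x) := h1
      _ = y ⬝ᵥ (B *ᵥ y) := hqx
      _ ≤ eigAsc hBH m * (y ⬝ᵥ y) := h3
  exact le_of_mul_le_mul_right this hpos

theorem interlace_upper {N : ℕ} {A : Matrix (Fin (N + 1)) (Fin (N + 1)) ℝ}
    (hA : A.IsHermitian) {B : Matrix (Fin N) (Fin N) ℝ}
    (hB : B = A.submatrix Fin.castSucc Fin.castSucc) (hBH : B.IsHermitian) (m : Fin N) :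
    eigAsc hBH m ≤ eigAsc hA m.succ := by
  classical
  have hm2 : (m : ℕ) + 2 ≤ N + 1 := by have := m.2; omega
  obtain ⟨c, hc, hcon⟩ := exists_null (P := N + 1) (p := (m : ℕ) + 2) (q := (m : ℕ) + 1)
    (Nat.lt_succ_self _)
    (fun t => if h : (t : ℕ) < (m : ℕ)
      then (Fin.snoc (sw hBH ⟨t.1, by omega⟩) 0 : Fin (N + 1) → ℝ)
      else Pi.single (Fin.last N) 1)
    (fun s => sw hA ⟨s.1, by omega⟩)
  set x : Fin (N + 1) → ℝ := ∑ s : Fin ((m : ℕ) + 2), c s • sw hA ⟨s.1, by omega⟩ with hx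
  have hxlast : x (Fin.last N) = 0 := by
    have h := hcon (Fin.last ((m : ℕ)))
    rw [dif_neg (by simp)] at h
    rwa [single_dotProduct, one_mul] at h
  set y : Fin N → ℝ := fun r => x (Fin.castSucc r) with hy2
  have hxy : x = (Fin.snoc y 0 : Fin (N + 1) → ℝ) := by
    funext r
    refine Fin.lastCases ?_ (fun r => ?_) r
    · simpa using hxlast
    · simp [hy2]
  have hhigh : ∀ t : Fin (N + 1), m.succ < t → sw hA t ⬝ᵥ x = 0 := by
    intro t ht
    rw [hx]
    refine sw_dot_comb hA _ c t fun s h => ?_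
    have hv : (s : ℕ) = (t : ℕ) := congrArg Fin.val h
    have := s.2
    have : (t : ℕ) < (m : ℕ) + 2 := by omega
    simp [Fin.lt_def, Fin.val_succ] at ht
    omega
  have h1 := quad_le hA x m.succ hhigh
  have hlow : ∀ t : Fin N, t < m → sw hBH t ⬝ᵥ y = 0 := by
    intro t ht
    have h := hcon ⟨t.1, by omega⟩
    rw [dif_pos (show ((⟨t.1, by omega⟩ : Fin ((m:ℕ)+1)) : ℕ) < (m : ℕ) from ht)] at h
    rw [hxy, snoc_dot] at h
    simpa using h
  have h2 := quad_ge hBH y m hlow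
  have hqx : x ⬝ᵥ (A *ᵥ x) = y ⬝ᵥ (B *ᵥ y) := by rw [hxy]; exact snoc_quad hB y
  have hnx : x ⬝ᵥ x = y ⬝ᵥ y := by rw [hxy]; exact snoc_dot y y
  have hxx : x ⬝ᵥ x = ∑ s, c s * c s := by
    rw [hx]
    exact comb_dot_emb hA _ (fun s s' h => by
      injection h with hv; exact Fin.ext hv) c c
  have hpos : 0 < x ⬝ᵥ x := by rw [hxx]; exact sumsq_pos hc
  have : eigAsc hBH m * (x ⬝ᵥ x) ≤ eigAsc hA m.succ * (x ⬝ᵥ x) := by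
    calc eigAsc hBH m * (x ⬝ᵥ x)
        = eigAsc hBH m * (y ⬝ᵥ y) := by rw [hnx]
      _ ≤ y ⬝ᵥ (B *ᵥ y) := h2
      _ = x ⬝ᵥ (A *ᵥ x) := hqx.symm
      _ ≤ eigAsc hA m.succ * (x ⬝ᵥ x) := h1
  exact le_of_mul_le_mul_right this hpos

/-- For a symmetric `(n+1) × (n+1)` matrix `A` with principal submatrix `B`,
off-diagonal last column `X`, unit eigenvector `u = (w, b)` for `λ_i(A)`, and
orthonormal eigenvectors `v_j` of `B` for `λ_{i+j}(B)`, `j = 0,…,k−1`: whenever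
`λ_{i+k}(A) − λ_i(A) ≤ ε`, each `j` satisfies
`|b|·|v_jᵀX| ≤ |λ_{i+j}(B) − λ_i(A)| ≤ ε` (using Cauchy interlacing). -/
theorem stmt11
    (n : ℕ) (A : Matrix (Fin (n + 1)) (Fin (n + 1)) ℝ) (hA : A.IsHermitian)
    (B : Matrix (Fin n) (Fin n) ℝ)
    (hB : B = A.submatrix Fin.castSucc Fin.castSucc) (hBH : B.IsHermitian)
    (X : Fin n → ℝ) (hX : X = fun j => A (Fin.castSucc j) (Fin.last n))
    (i k : ℕ) (hik : i + k ≤ n) (ε : ℝ)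
    (hgap : eigAsc hA ⟨i + k, by omega⟩ - eigAsc hA ⟨i, by omega⟩ ≤ ε)
    (u : Fin (n + 1) → ℝ) (hu : enorm2 u = 1)
    (hue : A.mulVec u = fun r => eigAsc hA ⟨i, by omega⟩ * u r)
    (v : Fin k → Fin n → ℝ)
    (horth : ∀ j j' : Fin k, v j ⬝ᵥ v j' = if j = j' then (1 : ℝ) else 0)
    (hve : ∀ j : Fin k,
      B.mulVec (v j) = fun r => eigAsc hBH ⟨i + j, by have := j.2; omega⟩ * v j r) :
    ∀ j : Fin k,
      |u (Fin.last n)| * |v j ⬝ᵥ X|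
          ≤ |eigAsc hBH ⟨i + j, by have := j.2; omega⟩ - eigAsc hA ⟨i, by omega⟩| ∧
      |eigAsc hBH ⟨i + j, by have := j.2; omega⟩ - eigAsc hA ⟨i, by omega⟩| ≤ ε := by
  intro j
  have hjk := j.2
  set lam : ℝ := eigAsc hA ⟨i, by omega⟩ with hlam
  set mu : ℝ := eigAsc hBH ⟨i + j, by have := j.2; omega⟩ with hmu
  -- interlacing bounds
  have hlo : lam ≤ mu := by
    have h1 := interlace_lower hA hB hBH ⟨i + (j : ℕ), by omega⟩
    have h2 : lam ≤ eigAsc hA (Fin.castSucc ⟨i + (j : ℕ), by omega⟩) := by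
      apply eigAsc_mono' hA
      simp [Fin.le_def]
    exact h2.trans h1
  have hhi : mu ≤ eigAsc hA ⟨i + k, by omega⟩ := by
    have h1 := interlace_upper hA hB hBH ⟨i + (j : ℕ), by omega⟩
    have h2 : eigAsc hA (Fin.succ ⟨i + (j : ℕ), by omega⟩) ≤ eigAsc hA ⟨i + k, by omega⟩ := by
      apply eigAsc_mono' hA
      simp [Fin.le_def]
    exact h1.trans h2
  have habs : |mu - lam| = mu - lam := abs_of_nonneg (by linarith)
  refine ⟨?_, by rw [habs]; linarith⟩
  -- first part
  set b : ℝ := u (Fin.last n) with hb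
  set w : Fin n → ℝ := fun r => u (Fin.castSucc r) with hw
  have key : B *ᵥ w + b • X = lam • w := by
    funext r
    have h := congrFun hue (Fin.castSucc r)
    simp only [mulVec, dotProduct] at h
    rw [Fin.sum_univ_castSucc] at h
    simp only [Pi.add_apply, Pi.smul_apply, smul_eq_mul, hB, hX, mulVec, dotProduct,
      submatrix_apply, hw, hb]
    linarith [h]
  have hBt : Bᵀ = B := by
    ext r c
    have h := congrFun (congrFun hBH r) c
    simpa [conjTranspose_apply] using h
  have hsym : v j ⬝ᵥ (B *ᵥ w) = mu * (v j ⬝ᵥ w) := by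
    rw [dotProduct_mulVec, ← mulVec_transpose, hBt, hve j]
    simp [dotProduct, Finset.mul_sum, mul_assoc]
    rfl
  have hmain : b * (v j ⬝ᵥ X) = (lam - mu) * (v j ⬝ᵥ w) := by
    have h := congrArg (fun z => v j ⬝ᵥ z) key
    simp only [dotProduct_add, dotProduct_smul, smul_eq_mul] at h
    rw [hsym] at h
    ring_nf
    ring_nf at h
    linarith [h]
  -- |v j ⬝ᵥ w| ≤ 1
  have hvv : v j ⬝ᵥ v j = 1 := by simpa using horth j j
  have huu : ∑ r, u r ^ 2 = 1 := by
    have h := hu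
    rw [enorm2] at h
    nlinarith [Real.sq_sqrt (Finset.sum_nonneg fun r (_ : r ∈ Finset.univ) => sq_nonneg (u r)),
      Real.sqrt_nonneg (∑ r, u r ^ 2)]
  have hww : w ⬝ᵥ w ≤ 1 := by
    rw [Fin.sum_univ_castSucc] at huu
    have : w ⬝ᵥ w = ∑ r : Fin n, u (Fin.castSucc r) ^ 2 := by
      simp [dotProduct, hw, sq]
    rw [this]
    nlinarith [sq_nonneg (u (Fin.last n))]
  have hcs : (v j ⬝ᵥ w) ^ 2 ≤ 1 := by
    have h := Finset.sum_mul_sq_le_sq_mul_sq Finset.univ (v j) w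
    have e1 : v j ⬝ᵥ w = ∑ r, v j r * w r := rfl
    have e2 : ∑ r, v j r ^ 2 = v j ⬝ᵥ v j := by simp [dotProduct, sq]
    have e3 : ∑ r, w r ^ 2 = w ⬝ᵥ w := by simp [dotProduct, sq]
    rw [e2, e3, hvv, one_mul] at h
    rw [e1]
    exact h.trans hww
  have hvw : |v j ⬝ᵥ w| ≤ 1 := by
    rw [abs_le]
    constructor <;> nlinarith [hcs]
  calc |b| * |v j ⬝ᵥ X| = |b * (v j ⬝ᵥ X)| := (abs_mul _ _).symm
    _ = |(lam - mu) * (v j ⬝ᵥ w)| := by rw [hmain]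
    _ = |lam - mu| * |v j ⬝ᵥ w| := abs_mul _ _
    _ ≤ |lam - mu| * 1 := by
        exact mul_le_mul_of_nonneg_left hvw (abs_nonneg _)
    _ = |mu - lam| := by rw [mul_one, abs_sub_comm]
end

section
/- Let M and M' be i.i.d. random matrices of size m × n, and let X ∈ ℝⁿ be arranged in blocks X = (X_{[d]}, X_{[d+1,m]}, X_{[m+1,n]}) compatible with the zeroed-out block structure M = [[0, H₁ᵀ, 0],[H₁, 0, 0]] where H₁ is (m−d) × d. Define H := [H₁, H₂] where H₂ is the corresponding block of M'. Then P(‖MX‖₂ ≤ 2m)² ≤ P( ‖H₁X_{[d]}‖₂ ≤ 2m and ‖H₂X_{[d]}‖₂ ≤ 2m and ‖HᵀX_{[d+1,m]}‖₂ ≤ 4m ). -/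
open MeasureTheory ProbabilityTheory Matrix

/-- The "zeroed-out" block matrix `M = [[0, H₁ᵀ, 0], [H₁, 0, 0]]` of size
`(d + e) × (d + e + k)`, built from an `e × d` matrix `H₁` (here `e = m − d`). -/
def zeroedOut {d e k : ℕ} (H₁ : Matrix (Fin e) (Fin d) ℝ) :
    Matrix (Fin d ⊕ Fin e) (Fin d ⊕ (Fin e ⊕ Fin k)) ℝ :=
  fun r c =>
    match r, c with
    | Sum.inl i, Sum.inr (Sum.inl j) => H₁ j i
    | Sum.inr j, Sum.inl i => H₁ j i
    | _, _ => 0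

instance {e d : ℕ} : MeasurableSpace (Matrix (Fin e) (Fin d) ℝ) :=
  inferInstanceAs (MeasurableSpace (Fin e → Fin d → ℝ))

lemma enorm2_nonneg {ι : Type*} [Fintype ι] (v : ι → ℝ) : 0 ≤ enorm2 v :=
  Real.sqrt_nonneg _

lemma enorm2_sq {ι : Type*} [Fintype ι] (v : ι → ℝ) : enorm2 v ^ 2 = ∑ i, v i ^ 2 :=
  Real.sq_sqrt (Finset.sum_nonneg fun _ _ => sq_nonneg _)

/-- tensorization: with `M` the zeroed-out matrix built from `H₁` and `M'`
an i.i.d. copy built from `H₂`, and `X` split into blocks `(X_{[d]}, X_{[d+1,m]}, rest)`,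
`P(‖MX‖₂ ≤ 2m)² ≤ P(‖H₁X_{[d]}‖ ≤ 2m, ‖H₂X_{[d]}‖ ≤ 2m, ‖HᵀX_{[d+1,m]}‖ ≤ 4m)`
where `H = [H₁, H₂]` and `m = d + e`. -/
theorem stmt14
    {Ω : Type*} [MeasurableSpace Ω] (μ : Measure Ω) [IsProbabilityMeasure μ]
    (d e k : ℕ)
    (H₁ H₂ : Ω → Matrix (Fin e) (Fin d) ℝ)
    (hmeas₁ : Measurable H₁) (hmeas₂ : Measurable H₂)
    (hindep : IndepFun H₁ H₂ μ) (hcopy : IdentDistrib H₂ H₁ μ μ)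
    (X : (Fin d ⊕ (Fin e ⊕ Fin k)) → ℝ)
    (Xd : Fin d → ℝ) (hXd : Xd = fun i => X (Sum.inl i))
    (Xe : Fin e → ℝ) (hXe : Xe = fun j => X (Sum.inr (Sum.inl j))) :
    (μ {ω | enorm2 ((zeroedOut (H₁ ω)).mulVec X) ≤ 2 * (d + e : ℝ)}) ^ 2
      ≤ μ {ω | enorm2 ((H₁ ω).mulVec Xd) ≤ 2 * (d + e : ℝ) ∧
               enorm2 ((H₂ ω).mulVec Xd) ≤ 2 * (d + e : ℝ) ∧
               Real.sqrt (enorm2 ((H₁ ω)ᵀ.mulVec Xe) ^ 2 + enorm2 ((H₂ ω)ᵀ.mulVec Xe) ^ 2)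
                 ≤ 4 * (d + e : ℝ)} := by
  set c : ℝ := 2 * (d + e : ℝ) with hc
  have hc0 : 0 ≤ c := by positivity
  set S : Set (Matrix (Fin e) (Fin d) ℝ) :=
    {A | enorm2 (A.mulVec Xd) ≤ c ∧ enorm2 (Aᵀ.mulVec Xe) ≤ c} with hSdef
  -- measurability of S
  have hS : MeasurableSet S := by
    have h1 : Measurable fun A : Matrix (Fin e) (Fin d) ℝ => enorm2 (A.mulVec Xd) := by
      unfold enorm2
      refine Real.continuous_sqrt.measurable.comp ?_
      simp only [Matrix.mulVec, dotProduct]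
      fun_prop
    have h2 : Measurable fun A : Matrix (Fin e) (Fin d) ℝ => enorm2 (Aᵀ.mulVec Xe) := by
      unfold enorm2
      refine Real.continuous_sqrt.measurable.comp ?_
      simp only [Matrix.mulVec, dotProduct, Matrix.transpose_apply]
      fun_prop
    exact (measurableSet_le h1 measurable_const).inter (measurableSet_le h2 measurable_const)
  -- key splitting of the norm of M X
  have key : ∀ A : Matrix (Fin e) (Fin d) ℝ,
      enorm2 ((zeroedOut (k := k) A).mulVec X) ^ 2
        = enorm2 (Aᵀ.mulVec Xe) ^ 2 + enorm2 (A.mulVec Xd) ^ 2 := by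
    intro A
    rw [enorm2_sq, enorm2_sq, enorm2_sq, Fintype.sum_sum_type]
    congr 1
    · refine Finset.sum_congr rfl fun i _ => ?_
      congr 1
      simp [zeroedOut, Matrix.mulVec, dotProduct, Fintype.sum_sum_type, hXe,
        Matrix.transpose]
    · refine Finset.sum_congr rfl fun j _ => ?_
      congr 1
      simp [zeroedOut, Matrix.mulVec, dotProduct, Fintype.sum_sum_type, hXd]
  -- inclusion of the MX-event into the preimage of S
  have hsub : {ω | enorm2 ((zeroedOut (H₁ ω)).mulVec X) ≤ c} ⊆ H₁ ⁻¹' S := by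
    intro ω hω
    simp only [Set.mem_setOf_eq] at hω
    have hk := key (H₁ ω)
    have n0 := enorm2_nonneg ((H₁ ω).mulVec Xd)
    have n1 := enorm2_nonneg ((H₁ ω)ᵀ.mulVec Xe)
    have n2 := enorm2_nonneg ((zeroedOut (H₁ ω)).mulVec X)
    constructor
    · nlinarith
    · nlinarith
  have h1 : μ {ω | enorm2 ((zeroedOut (H₁ ω)).mulVec X) ≤ c} ≤ μ (H₁ ⁻¹' S) :=
    measure_mono hsub
  calc (μ {ω | enorm2 ((zeroedOut (H₁ ω)).mulVec X) ≤ c}) ^ 2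
      ≤ μ (H₁ ⁻¹' S) ^ 2 := pow_le_pow_left' h1 2
    _ = μ (H₁ ⁻¹' S) * μ (H₂ ⁻¹' S) := by rw [sq, hcopy.measure_mem_eq hS]
    _ = μ (H₁ ⁻¹' S ∩ H₂ ⁻¹' S) :=
        (hindep.measure_inter_preimage_eq_mul S S hS hS).symm
    _ ≤ _ := by
        apply measure_mono
        rintro ω ⟨⟨ha, hb⟩, ⟨ha', hb'⟩⟩
        refine ⟨ha, ha', ?_⟩
        have n1 := enorm2_nonneg ((H₁ ω)ᵀ.mulVec Xe)
        have n2 := enorm2_nonneg ((H₂ ω)ᵀ.mulVec Xe)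
        have h4 : (4 : ℝ) * (d + e : ℝ) = 2 * c := by ring
        have : Real.sqrt (enorm2 ((H₁ ω)ᵀ.mulVec Xe) ^ 2 + enorm2 ((H₂ ω)ᵀ.mulVec Xe) ^ 2)
            ≤ Real.sqrt ((2 * c) ^ 2) := by
          apply Real.sqrt_le_sqrt
          nlinarith
        rw [Real.sqrt_sq (by positivity)] at this
        linarith
end
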